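/- arXiv:0809.0603 — 2 statements merged into one kernel-verified Lean document; each statement's English description precedes it below -/
import Mathlib

section
/- Let u be a Sturmian word with slope α = [0,1,a₂,a₃,…] and convergent denominators q_N. Then for every N ≥ 1 there exists a factor w of u with |w| = q_N and ind(w) ≥ 2 + a_{N+1} + (q_{N−1} − 2)/q_N. -/
open Filter Topology

namespace SturmianPaper

variable {A : Type*} [DecidableEq A]

/-- The factor `w` occurs in the infinite word `u` at position `i`. -/
def FactorAt (u : ℕ → A) (w : List A) (i : ℕ) : Prop :=
  w = (List.range w.length).map fun j => u (i + j)

/-- `w` is a factor of the infinite word `u`. -/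
def IsFactor (u : ℕ → A) (w : List A) : Prop := ∃ i, FactorAt u w i

/-- The factor complexity of `u`: the number of factors of length `n`. -/
noncomputable def complexity (u : ℕ → A) (n : ℕ) : ℕ :=
  Set.ncard {w : List A | IsFactor u w ∧ w.length = n}

/-- A Sturmian word: complexity `n + 1` for every `n` (this forces aperiodicity). -/
def IsSturmian (u : ℕ → A) : Prop := ∀ n, complexity u n = n + 1

/-- `u` is eventually periodic. -/
def EventuallyPeriodic (u : ℕ → A) : Prop :=
  ∃ p > 0, ∃ N, ∀ n ≥ N, u (n + p) = u n

/-- `u` is uniformly recurrent: every factor occurs with bounded gaps. -/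
def UniformlyRecurrent (u : ℕ → A) : Prop :=
  ∀ w, IsFactor u w → ∃ B, ∀ k, ∃ i, k ≤ i ∧ i < k + B ∧ FactorAt u w i

/-- The number of occurrences of `w` in the finite word `x`. -/
def occCount (x w : List A) : ℕ :=
  ((List.range (x.length + 1)).filter fun i => decide (w <+: x.drop i)).length

/-- `v` is a return word of the factor `w` of `u`. -/
def IsReturnWord (u : ℕ → A) (w v : List A) : Prop :=
  v ≠ [] ∧ IsFactor u (v ++ w) ∧ w <+: v ++ w ∧ occCount (v ++ w) w = 2

/-- Recurrence function: `R n + 1` is the maximal length of a complete return word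
`v ++ w` over factors `w` of length `n` and return words `v` of `w`. -/
noncomputable def recFun (u : ℕ → A) (n : ℕ) : ℕ :=
  sSup {m | ∃ w v, IsFactor u w ∧ w.length = n ∧ IsReturnWord u w v ∧
    m + 1 = v.length + w.length}

/-- `v = w ^ (|v| / |w|)`: `v` is a fractional power of `w`,
i.e. a prefix of `w w w ⋯` of length at least `|w|`. -/
def FracPow (w v : List A) : Prop :=
  w ≠ [] ∧ w.length ≤ v.length ∧ ∀ i < v.length, v[i]? = w[i % w.length]?

/-- The set of rational exponents `r` (viewed inside `ℝ`) such that `w ^ r ∈ L(u)`. -/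
def expSet (u : ℕ → A) (w : List A) : Set ℝ :=
  {r | ∃ v, IsFactor u v ∧ FracPow w v ∧ r = (v.length : ℝ) / (w.length : ℝ)}

/-- The index of the factor `w` in `u`: `sup {r ∈ ℚ | w ^ r ∈ L(u)}`. -/
noncomputable def index (u : ℕ → A) (w : List A) : ℝ := sSup (expSet u w)

/-- A finite word is primitive if it is not a proper integer power. -/
def Primitive (w : List A) : Prop :=
  w ≠ [] ∧ ∀ (z : List A) (k : ℕ), 2 ≤ k → w ≠ (List.replicate k z).flatten

/-- `w` is left special in `u` (alphabet `Bool`, `true = A`, `false = B`). -/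
def LeftSpecial (u : ℕ → Bool) (w : List Bool) : Prop :=
  IsFactor u (true :: w) ∧ IsFactor u (false :: w)

/-- `w` is right special in `u`. -/
def RightSpecial (u : ℕ → Bool) (w : List Bool) : Prop :=
  IsFactor u (w ++ [true]) ∧ IsFactor u (w ++ [false])

/-- The Sturmian word of slope `α` and intercept `x₀`, coding the orbit of `x₀`
under the exchange of the two intervals `I_A = [0, α)` (coded `true`) and
`I_B = [α, 1)` (coded `false`); the exchange is the rotation `x ↦ x + (1 - α) mod 1`. -/
noncomputable def sturmianWord (α x₀ : ℝ) : ℕ → Bool :=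
  fun n => decide (Int.fract (x₀ + n * (1 - α)) < α)

/-- The Sturmian morphism `A ↦ AᶜB`, `B ↦ A` applied to a finite word. -/
def phiW (c : ℕ) (w : List Bool) : List Bool :=
  (w.map fun b => if b then List.replicate c true ++ [false] else [true]).flatten

/-- The Sturmian morphism `A ↦ AᶜB`, `B ↦ A` applied to an infinite word. -/
noncomputable def phiInf (c : ℕ) (u : ℕ → Bool) : ℕ → Bool :=
  fun n => (phiW c ((List.range (n + 1)).map u)).getD n false



lemma walk_lemma (s t : ℝ) (hs0 : 0 < s) (hs1 : s < 1) :
    ∃ j : ℕ, (j : ℝ) ≤ 1 / s ∧ Int.fract (t - j * s) < s := by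
  refine ⟨⌊Int.fract t / s⌋₊, ?_, ?_⟩
  · refine le_trans (Nat.floor_le (div_nonneg (Int.fract_nonneg t) hs0.le)) ?_
    have h1 : Int.fract t ≤ 1 := (Int.fract_lt_one t).le
    gcongr
  · set j := ⌊Int.fract t / s⌋₊ with hj
    have hj1 : (j:ℝ) * s ≤ Int.fract t := by
      rw [← le_div_iff₀ hs0]
      exact Nat.floor_le (div_nonneg (Int.fract_nonneg t) hs0.le)
    have hj2 : Int.fract t < ((j:ℝ) + 1) * s := by
      rw [← div_lt_iff₀ hs0]
      push_cast
      exact Nat.lt_floor_add_one _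
    have key : t - (j:ℝ) * s = (Int.fract t - j * s) + (⌊t⌋ : ℤ) := by
      have := Int.floor_add_fract t
      linarith
    rw [key, Int.fract_add_intCast, Int.fract_eq_self.mpr ⟨by linarith, by linarith⟩]
    linarith

lemma fract_shift_eval {X : ℝ} {r : ℝ} (h0 : 0 ≤ r) (h1 : r < 1)
    (h : ∃ m : ℤ, X = r + m) : Int.fract X = r := by
  obtain ⟨m, rfl⟩ := h
  rw [Int.fract_add_intCast, Int.fract_eq_self.mpr ⟨h0, h1⟩]

lemma agree_pos {α e X : ℝ} (hα2 : 1/2 < α) (hα1 : α < 1) (he0 : 0 < e)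
    (he1 : e ≤ 1 - α)
    (h1 : ¬ Int.fract (X - α) < e) (h2 : ¬ Int.fract X < e) :
    (Int.fract (X - e) < α ↔ Int.fract X < α) := by
  push_neg at h1 h2
  have hx0 := Int.fract_nonneg X
  have hx1 := Int.fract_lt_one X
  set x := Int.fract X with hx
  have hfe : Int.fract (X - e) = x - e := by
    apply fract_shift_eval (by linarith) (by linarith)
    exact ⟨⌊X⌋, by have := Int.floor_add_fract X; linarith⟩
  rw [hfe]
  constructor
  · intro h
    by_contra hcon
    push_neg at hcon
    have hfa : Int.fract (X - α) = x - α := by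
      apply fract_shift_eval (by linarith) (by linarith)
      exact ⟨⌊X⌋, by have := Int.floor_add_fract X; linarith⟩
    rw [hfa] at h1
    linarith
  · intro h; linarith

lemma agree_neg {α b X : ℝ} (hα2 : 1/2 < α) (hα1 : α < 1) (hb0 : 0 < b)
    (hb1 : b ≤ 1 - α)
    (h1 : ¬ Int.fract (X - (α - b)) < b) (h2 : ¬ Int.fract (X + b) < b) :
    (Int.fract (X + b) < α ↔ Int.fract X < α) := by
  push_neg at h1 h2
  have hx0 := Int.fract_nonneg X
  have hx1 := Int.fract_lt_one X
  set x := Int.fract X with hx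
  have hXx : ∃ m : ℤ, X = x + m := ⟨⌊X⌋, by have := Int.floor_add_fract X; linarith⟩
  obtain ⟨m, hm⟩ := hXx
  rcases lt_or_ge (x + b) 1 with hc | hc
  · have hfb : Int.fract (X + b) = x + b := by
      apply fract_shift_eval (by linarith) hc
      exact ⟨m, by linarith⟩
    rw [hfb]
    constructor
    · intro h; linarith
    · intro h
      by_contra hcon
      push_neg at hcon
      have hfa : Int.fract (X - (α - b)) = x - (α - b) := by
        apply fract_shift_eval (by linarith) (by linarith)
        exact ⟨m, by linarith⟩
      rw [hfa] at h1
      linarith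
  · exfalso
    have hfb : Int.fract (X + b) = x + b - 1 := by
      apply fract_shift_eval (by linarith) (by linarith)
      exact ⟨m + 1, by push_cast; linarith⟩
    rw [hfb] at h2
    linarith

lemma disagree_pos {α e X : ℝ} (hα2 : 1/2 < α) (hα1 : α < 1) (he0 : 0 < e)
    (he1 : e ≤ 1 - α)
    (h1 : Int.fract (X - α) < e) :
    ¬ (Int.fract (X - e) < α ↔ Int.fract X < α) := by
  have hx0 := Int.fract_nonneg X
  have hx1 := Int.fract_lt_one X
  have hfa0 := Int.fract_nonneg (X - α)
  set x := Int.fract X with hx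
  have hXx : ∃ m : ℤ, X = x + m := ⟨⌊X⌋, by have := Int.floor_add_fract X; linarith⟩
  obtain ⟨m, hm⟩ := hXx
  have hax : α ≤ x := by
    by_contra hcon
    push_neg at hcon
    have hfa : Int.fract (X - α) = x - α + 1 := by
      apply fract_shift_eval (by linarith) (by linarith)
      exact ⟨m - 1, by push_cast; linarith⟩
    rw [hfa] at h1
    linarith
  have hfa : Int.fract (X - α) = x - α := by
    apply fract_shift_eval (by linarith) (by linarith)
    exact ⟨m, by linarith⟩
  rw [hfa] at h1
  have hfe : Int.fract (X - e) = x - e := by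
    apply fract_shift_eval (by linarith) (by linarith)
    exact ⟨m, by linarith⟩
  rw [hfe]
  intro hiff
  have := hiff.1 (by linarith)
  linarith

lemma disagree_neg {α b X : ℝ} (hα2 : 1/2 < α) (hα1 : α < 1) (hb0 : 0 < b)
    (hb1 : b ≤ 1 - α)
    (h1 : Int.fract (X - (α - b)) < b) :
    ¬ (Int.fract (X + b) < α ↔ Int.fract X < α) := by
  have hx0 := Int.fract_nonneg X
  have hx1 := Int.fract_lt_one X
  have hfa0 := Int.fract_nonneg (X - (α - b))
  set x := Int.fract X with hx
  have hXx : ∃ m : ℤ, X = x + m := ⟨⌊X⌋, by have := Int.floor_add_fract X; linarith⟩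
  obtain ⟨m, hm⟩ := hXx
  have hax : α - b ≤ x := by
    by_contra hcon
    push_neg at hcon
    have hfa : Int.fract (X - (α - b)) = x - (α - b) + 1 := by
      apply fract_shift_eval (by linarith) (by linarith)
      exact ⟨m - 1, by push_cast; linarith⟩
    rw [hfa] at h1
    linarith
  have hfa : Int.fract (X - (α - b)) = x - (α - b) := by
    apply fract_shift_eval (by linarith) (by linarith)
    exact ⟨m, by linarith⟩
  rw [hfa] at h1
  have hxa : x < α := by linarith
  have hfb : Int.fract (X + b) = x + b := by
    apply fract_shift_eval (by linarith) (by linarith)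
    exact ⟨m, by linarith⟩
  rw [hfb]
  intro hiff
  have := hiff.2 hxa
  linarith

lemma sign_alternate (α : ℝ) (hirr : Irrational α) (a p q : ℕ → ℕ)
    (hq1 : ∀ m, 1 ≤ q m)
    (hq0 : q 0 = 1) (hp0 : p 0 = 0)
    (hqrec : ∀ N, q (N + 2) = a (N + 2) * q (N + 1) + q N)
    (hprec : ∀ N, p (N + 2) = a (N + 2) * p (N + 1) + p N)
    (hα0 : 0 < α)
    (hcf : Tendsto (fun N => (p N : ℝ) / (q N : ℝ)) atTop (nhds α)) :
    ∀ m, 0 < (-1:ℝ)^m * ((q m : ℝ) * α - (p m : ℝ)) := by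
  set E : ℕ → ℝ := fun m => (q m : ℝ) * α - (p m : ℝ) with hE
  have hqpos : ∀ m, (0:ℝ) < q m := fun m => by
    exact_mod_cast Nat.lt_of_lt_of_le Nat.zero_lt_one (hq1 m)
  have hEne : ∀ m, E m ≠ 0 := by
    intro m h
    apply hirr
    refine ⟨(p m : ℚ) / (q m : ℚ), ?_⟩
    have hq : (q m : ℝ) ≠ 0 := ne_of_gt (hqpos m)
    push_cast
    rw [div_eq_iff hq]
    simp only [hE] at h
    linarith
  have hErec : ∀ m, E (m+2) = (a (m+2) : ℝ) * E (m+1) + E m := by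
    intro m; simp only [hE]; rw [hqrec m, hprec m]; push_cast; ring
  have htend : Tendsto (fun m => E m / (q m : ℝ)) atTop (nhds 0) := by
    have heq : (fun m => E m / (q m : ℝ)) = fun m => α - (p m : ℝ)/(q m : ℝ) := by
      funext m
      have hq : (q m : ℝ) ≠ 0 := ne_of_gt (hqpos m)
      simp only [hE]
      field_simp
    rw [heq]
    have h := (tendsto_const_nhds (x := α) (f := (atTop : Filter ℕ))).sub hcf
    simpa using h
  have halt : ∀ m, E m * E (m+1) < 0 := by
    intro m
    by_contra hcon
    push_neg at hcon
    have hprod : 0 < E m * E (m+1) :=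
      lt_of_le_of_ne hcon (Ne.symm (mul_ne_zero (hEne m) (hEne (m+1))))
    set s : ℝ := if 0 < E m then 1 else -1 with hs
    have hs1 : 0 < s * E m := by
      by_cases h : 0 < E m
      · simp only [hs, if_pos h]; linarith
      · have hneg : E m < 0 := lt_of_le_of_ne (not_lt.1 h) (hEne m)
        simp only [hs, if_neg h]; linarith
    have hs2 : 0 < s * E (m+1) := by
      by_cases h : 0 < E m
      · have h2 : 0 < E (m+1) := by nlinarith
        simp only [hs, if_pos h]; linarith
      · have hneg : E m < 0 := lt_of_le_of_ne (not_lt.1 h) (hEne m)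
        have h2 : E (m+1) < 0 := by nlinarith
        simp only [hs, if_neg h]; linarith
    set c : ℝ := min (s * E m / (q m : ℝ)) (s * E (m+1) / (q (m+1) : ℝ)) with hc
    have hcpos : 0 < c := lt_min (div_pos hs1 (hqpos m)) (div_pos hs2 (hqpos (m+1)))
    have key : ∀ k, c * (q (m+k) : ℝ) ≤ s * E (m+k) ∧ c * (q (m+k+1) : ℝ) ≤ s * E (m+k+1) := by
      intro k
      induction k with
      | zero =>
        constructor
        · exact (le_div_iff₀ (hqpos m)).1 (min_le_left _ _)
        · exact (le_div_iff₀ (hqpos (m+1))).1 (min_le_right _ _)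
      | succ k ih =>
        refine ⟨ih.2, ?_⟩
        show c * (q (m+k+2) : ℝ) ≤ s * E (m+k+2)
        have hErec' := hErec (m+k)
        have hq2 : (q (m+k+2) : ℝ) = (a (m+k+2) : ℝ) * (q (m+k+1) : ℝ) + (q (m+k) : ℝ) := by
          rw [hqrec (m+k)]; push_cast; ring
        have ha0 : (0:ℝ) ≤ (a (m+k+2) : ℝ) := Nat.cast_nonneg _
        have hmul := mul_le_mul_of_nonneg_left ih.2 ha0
        rw [hq2, hErec']
        nlinarith [ih.1]
    have hev : ∀ᶠ k in atTop, |E k / (q k : ℝ)| < c := by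
      have habs : Tendsto (fun m => |E m / (q m : ℝ)|) atTop (nhds 0) := by
        simpa using htend.abs
      exact habs.eventually_lt_const hcpos
    obtain ⟨k, hkval, hk⟩ := (hev.and (eventually_ge_atTop m)).exists
    obtain ⟨d, rfl⟩ : ∃ d, k = m + d := ⟨k - m, by omega⟩
    have h1 : c * (q (m+d) : ℝ) ≤ s * E (m+d) := (key d).1
    have habs1 : |s| = 1 := by
      by_cases h : 0 < E m
      · simp [hs, if_pos h]
      · simp [hs, if_neg h]
    have h2 : s * E (m+d) ≤ |E (m+d)| := by
      calc s * E (m+d) ≤ |s * E (m+d)| := le_abs_self _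
        _ = |E (m+d)| := by rw [abs_mul, habs1, one_mul]
    have h3 : c ≤ |E (m+d)| / (q (m+d) : ℝ) := (le_div_iff₀ (hqpos _)).2 (le_trans h1 h2)
    have h4 : |E (m+d) / (q (m+d) : ℝ)| = |E (m+d)| / (q (m+d) : ℝ) := by
      rw [abs_div, abs_of_pos (hqpos _)]
    rw [h4] at hkval
    linarith
  have main : ∀ m, 0 < (-1:ℝ)^m * E m := by
    intro m
    induction m with
    | zero =>
      simpa [hE, hq0, hp0] using hα0
    | succ m ih =>
      have h := halt m
      have hP : ((-1:ℝ)^m) * ((-1:ℝ)^m) = 1 := by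
        rw [← pow_add]
        exact Even.neg_one_pow ⟨m, rfl⟩
      rw [pow_succ]
      by_contra hcon
      push_neg at hcon
      have hge : 0 ≤ ((-1:ℝ)^m) * E (m+1) := by nlinarith
      have hx : (0:ℝ) ≤ ((-1:ℝ)^m * E m) * ((-1:ℝ)^m * E (m+1)) := mul_nonneg ih.le hge
      have hy : ((-1:ℝ)^m * E m) * ((-1:ℝ)^m * E (m+1)) = E m * E (m+1) := by
        linear_combination (E m * E (m+1)) * hP
      rw [hy] at hx
      linarith
  intro m
  simpa [hE] using main m

lemma det_lemma (a p q : ℕ → ℕ)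
    (hq0 : q 0 = 1) (hq1 : q 1 = 1) (hp0 : p 0 = 0) (hp1 : p 1 = 1)
    (hqrec : ∀ N, q (N + 2) = a (N + 2) * q (N + 1) + q N)
    (hprec : ∀ N, p (N + 2) = a (N + 2) * p (N + 1) + p N) :
    ∀ m, (p (m+1) : ℤ) * (q m : ℤ) - (p m : ℤ) * (q (m+1) : ℤ) = (-1)^m := by
  intro m
  induction m with
  | zero => simp [hq0, hq1, hp0, hp1]
  | succ m ih =>
    rw [hqrec m, hprec m, pow_succ]
    push_cast
    linear_combination (-1 : ℤ) * ih

lemma best_approx (α : ℝ) (p q : ℕ → ℕ) (hq1 : ∀ m, 1 ≤ q m)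
    (hdet : ∀ m, (p (m+1) : ℤ) * (q m : ℤ) - (p m : ℤ) * (q (m+1) : ℤ) = (-1)^m)
    (hsign : ∀ m, 0 < (-1:ℝ)^m * ((q m : ℝ) * α - (p m : ℝ)))
    (m : ℕ) (k : ℕ) (z : ℤ) (hk1 : 1 ≤ k) (hk2 : k < q (m+1)) :
    (-1:ℝ)^m * ((q m : ℝ) * α - (p m : ℝ)) ≤ |(k:ℝ) * α - (z:ℝ)| := by
  set ε : ℤ := (-1)^m with hε
  have hε2 : ε * ε = 1 := by
    rw [hε, ← pow_add]
    exact Even.neg_one_pow ⟨m, rfl⟩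
  have hD : (p (m+1) : ℤ) * (q m : ℤ) - (p m : ℤ) * (q (m+1) : ℤ) = ε := hdet m
  obtain ⟨x, y, hkxy, hzxy⟩ : ∃ x y : ℤ, (k:ℤ) = x * (q m : ℤ) + y * (q (m+1) : ℤ) ∧
      z = x * (p m : ℤ) + y * (p (m+1) : ℤ) :=
    ⟨ε * ((k:ℤ) * (p (m+1) : ℤ) - z * (q (m+1) : ℤ)), ε * (z * (q m : ℤ) - (k:ℤ) * (p m : ℤ)),
      by linear_combination (-(k:ℤ)) * hε2 - ε * (k:ℤ) * hD,
      by linear_combination (-(z:ℤ)) * hε2 - ε * z * hD⟩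
  have hkR : (k:ℝ) = (x:ℝ) * (q m : ℝ) + (y:ℝ) * (q (m+1) : ℝ) := by exact_mod_cast hkxy
  have hzR : (z:ℝ) = (x:ℝ) * (p m : ℝ) + (y:ℝ) * (p (m+1) : ℝ) := by exact_mod_cast hzxy
  set A := (-1:ℝ)^m * ((q m : ℝ) * α - (p m : ℝ)) with hA
  set B := (-1:ℝ)^(m+1) * ((q (m+1) : ℝ) * α - (p (m+1) : ℝ)) with hB
  have hA0 : 0 < A := hsign m
  have hB0 : 0 < B := hsign (m+1)
  have hform : ((-1:ℝ)^m) * ((k:ℝ) * α - (z:ℝ)) = (x:ℝ) * A - (y:ℝ) * B := by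
    rw [hA, hB, pow_succ]
    linear_combination ((-1:ℝ)^m * α) * hkR - ((-1:ℝ)^m) * hzR
  have habs : |((-1:ℝ)^m) * ((k:ℝ)*α - (z:ℝ))| = |(k:ℝ)*α - (z:ℝ)| := by
    rw [abs_mul, abs_pow, abs_neg, abs_one, one_pow, one_mul]
  have hqmZ : (1:ℤ) ≤ (q m : ℤ) := by exact_mod_cast hq1 m
  have hqm1Z : (1:ℤ) ≤ (q (m+1) : ℤ) := by exact_mod_cast hq1 (m+1)
  have hk1' : (1:ℤ) ≤ (k:ℤ) := by exact_mod_cast hk1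
  have hk2' : (k:ℤ) < (q (m+1) : ℤ) := by exact_mod_cast hk2
  rcases eq_or_ne y 0 with hy0 | hy0
  · have hx1 : 1 ≤ x := by
      rcases le_or_gt x 0 with h | h
      · exfalso
        have hle : x * (q m : ℤ) ≤ 0 := mul_nonpos_of_nonpos_of_nonneg h (by omega)
        rw [hkxy, hy0] at hk1'
        omega
      · omega
    have hxA : ((-1:ℝ)^m) * ((k:ℝ)*α - (z:ℝ)) = (x:ℝ) * A := by
      rw [hform, hy0]; push_cast; ring
    have hxR : (1:ℝ) ≤ (x:ℝ) := by exact_mod_cast hx1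
    calc A ≤ (x:ℝ) * A := by nlinarith [mul_le_mul_of_nonneg_right hxR hA0.le]
      _ = ((-1:ℝ)^m) * ((k:ℝ)*α - (z:ℝ)) := hxA.symm
      _ ≤ |((-1:ℝ)^m) * ((k:ℝ)*α - (z:ℝ))| := le_abs_self _
      _ = |(k:ℝ)*α - (z:ℝ)| := habs
  · rcases eq_or_ne x 0 with hx0 | hx0
    · exfalso
      rw [hx0, zero_mul, zero_add] at hkxy
      rcases lt_or_ge y 0 with h | h
      · have : y * (q (m+1) : ℤ) ≤ -(q (m+1) : ℤ) := by nlinarith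
        omega
      · have hy1 : 1 ≤ y := by omega
        have : (q (m+1) : ℤ) ≤ y * (q (m+1) : ℤ) := by nlinarith
        omega
    · have hopp : (1 ≤ x ∧ y ≤ -1) ∨ (x ≤ -1 ∧ 1 ≤ y) := by
        rcases lt_or_ge 0 x with h1 | h1 <;> rcases lt_or_ge 0 y with h2 | h2
        · exfalso
          have hxx : (q m : ℤ) ≤ x * (q m : ℤ) := by nlinarith
          have hyy : (q (m+1) : ℤ) ≤ y * (q (m+1) : ℤ) := by nlinarith
          omega
        · left; omega
        · right; omega
        · exfalso
          have hxx : x * (q m : ℤ) ≤ 0 := mul_nonpos_of_nonpos_of_nonneg h1 (by omega)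
          have hyy : y * (q (m+1) : ℤ) ≤ 0 := mul_nonpos_of_nonpos_of_nonneg h2 (by omega)
          omega
      rcases hopp with ⟨h1, h2⟩ | ⟨h1, h2⟩
      · have hxR : (1:ℝ) ≤ (x:ℝ) := by exact_mod_cast h1
        have hyR : (y:ℝ) ≤ -1 := by exact_mod_cast h2
        have hmain : A ≤ ((-1:ℝ)^m) * ((k:ℝ)*α - (z:ℝ)) := by
          rw [hform]
          have t1 : 1 * A ≤ (x:ℝ) * A := mul_le_mul_of_nonneg_right hxR hA0.le
          have t2 : (y:ℝ) * B ≤ -1 * B := mul_le_mul_of_nonneg_right hyR hB0.le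
          linarith
        calc A ≤ ((-1:ℝ)^m) * ((k:ℝ)*α - (z:ℝ)) := hmain
          _ ≤ |((-1:ℝ)^m) * ((k:ℝ)*α - (z:ℝ))| := le_abs_self _
          _ = |(k:ℝ)*α - (z:ℝ)| := habs
      · have hxR : (x:ℝ) ≤ -1 := by exact_mod_cast h1
        have hyR : (1:ℝ) ≤ (y:ℝ) := by exact_mod_cast h2
        have hmain : A ≤ -(((-1:ℝ)^m) * ((k:ℝ)*α - (z:ℝ))) := by
          rw [hform]
          have t1 : (x:ℝ) * A ≤ -1 * A := mul_le_mul_of_nonneg_right hxR hA0.le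
          have t2 : 1 * B ≤ (y:ℝ) * B := mul_le_mul_of_nonneg_right hyR hB0.le
          linarith
        calc A ≤ -(((-1:ℝ)^m) * ((k:ℝ)*α - (z:ℝ))) := hmain
          _ ≤ |((-1:ℝ)^m) * ((k:ℝ)*α - (z:ℝ))| := neg_le_abs _
          _ = |(k:ℝ)*α - (z:ℝ)| := habs
set_option maxHeartbeats 1000000 in
/-- for every `N ≥ 1` a Sturmian word of slope `α = [0,1,a₂,a₃,…]`
has a factor `w` of length `q_N` with `ind(w) ≥ 2 + a_{N+1} + (q_{N−1} − 2)/q_N`. -/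
theorem index_lower_bound (α x₀ : ℝ) (hirr : Irrational α)
    (hα : 1/2 < α) (hα1 : α < 1) (hx0 : 0 ≤ x₀) (hx1 : x₀ < 1)
    (a p q : ℕ → ℕ) (ha1 : a 1 = 1) (hapos : ∀ n, 1 ≤ n → 1 ≤ a n)
    (hq0 : q 0 = 1) (hq1 : q 1 = 1)
    (hqrec : ∀ N, q (N + 2) = a (N + 2) * q (N + 1) + q N)
    (hp0 : p 0 = 0) (hp1 : p 1 = 1)
    (hprec : ∀ N, p (N + 2) = a (N + 2) * p (N + 1) + p N)
    (hcf : Tendsto (fun N => (p N : ℝ) / (q N : ℝ)) atTop (nhds α)) (N : ℕ) (hN : 1 ≤ N) :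
    ∃ w : List Bool, IsFactor (sturmianWord α x₀) w ∧ w.length = q N ∧
      2 + (a (N + 1) : ℝ) + ((q (N - 1) : ℝ) - 2) / (q N : ℝ) ≤
        index (sturmianWord α x₀) w := by
  obtain ⟨n, rfl⟩ : ∃ n, N = n + 1 := ⟨N - 1, by omega⟩
  clear hN
  set u := sturmianWord α x₀ with hu
  have hα0 : (0:ℝ) < α := by linarith
  -- basic facts on q
  have hq1' : ∀ m, 1 ≤ q m := by
    have H : ∀ m, 1 ≤ q m ∧ 1 ≤ q (m+1) := by
      intro m
      induction m with
      | zero => exact ⟨by rw [hq0], by rw [hq1]⟩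
      | succ k ih =>
        refine ⟨ih.2, ?_⟩
        rw [hqrec k]
        calc 1 ≤ q k := ih.1
          _ ≤ a (k + 2) * q (k + 1) + q k := Nat.le_add_left _ _
    exact fun m => (H m).1
  have hqposR : ∀ m, (0:ℝ) < q m := fun m => by
    exact_mod_cast Nat.lt_of_lt_of_le Nat.zero_lt_one (hq1' m)
  have hdet := det_lemma a p q hq0 hq1 hp0 hp1 hqrec hprec
  have hsign := sign_alternate α hirr a p q hq1' hq0 hp0 hqrec hprec hα0 hcf
  set A : ℕ → ℝ := fun m => (-1:ℝ)^m * ((q m : ℝ) * α - (p m : ℝ)) with hA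
  have hA0 : ∀ m, 0 < A m := hsign
  have best : ∀ m (k : ℕ) (z : ℤ), 1 ≤ k → k < q (m+1) → A m ≤ |(k:ℝ)*α - (z:ℝ)| :=
    fun m k z h1 h2 => best_approx α p q hq1' hdet hsign m k z h1 h2
  have hEpar : ∀ m, Even m → ((q m:ℝ)*α - (p m : ℝ)) = A m := by
    intro m hm
    have h1 : ((-1:ℝ)^m) = 1 := hm.neg_one_pow
    simp only [hA]
    rw [h1, one_mul]
  have hOpar : ∀ m, Odd m → ((q m:ℝ)*α - (p m : ℝ)) = -A m := by
    intro m hm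
    have h1 : ((-1:ℝ)^m) = -1 := hm.neg_one_pow
    simp only [hA]
    rw [h1]; ring
  have hArec : ∀ m, A m = (a (m+2):ℝ) * A (m+1) + A (m+2) := by
    intro m
    have h2 : ((q (m+2):ℝ) * α - (p (m+2) : ℝ))
        = (a (m+2):ℝ) * ((q (m+1):ℝ)*α - (p (m+1) : ℝ)) + ((q m:ℝ)*α - (p m : ℝ)) := by
      rw [hqrec m, hprec m]; push_cast; ring
    simp only [hA]
    have e1 : (-1:ℝ)^(m+1) = (-1:ℝ)^m * (-1) := pow_succ _ _
    have e2 : (-1:ℝ)^(m+2) = (-1:ℝ)^m := by rw [pow_add]; norm_num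
    rw [e1, e2]
    linear_combination (-(-1:ℝ)^m) * h2
  have haposR : ∀ m, 1 ≤ (a (m+2):ℝ) := fun m => by exact_mod_cast hapos (m+2) (by omega)
  have hAdec : ∀ m, A (m+1) < A m := by
    intro m
    have h := hArec m
    have h1 := hA0 (m+1)
    have h2 := hA0 (m+2)
    nlinarith [haposR m]
  have hAmono : ∀ j m, A (m+j) ≤ A m := by
    intro j
    induction j with
    | zero => exact fun m => le_refl _
    | succ j ih =>
      intro m
      have e : m + (j+1) = (m + j) + 1 := rfl
      rw [e]
      exact le_trans (hAdec (m+j)).le (ih m)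
  have hA1 : A 1 = 1 - α := by
    simp only [hA]
    rw [hq1, hp1]
    norm_num
  have hA0v : A 0 = α := by
    simp only [hA]
    rw [hq0, hp0]
    norm_num
  have hAle : ∀ m, 1 ≤ m → A m ≤ 1 - α := by
    intro m hm
    obtain ⟨j, rfl⟩ : ∃ j, m = 1 + j := ⟨m - 1, by omega⟩
    rw [← hA1]
    exact hAmono j 1
  set B := A (n+1) with hBdef
  set B' := A (n+2) with hB'def
  have hB0 : 0 < B := hA0 _
  have hB'0 : 0 < B' := hA0 _
  have hB'B : B' < B := hAdec (n+1)
  have hBle : B ≤ 1 - α := hAle (n+1) (by omega)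
  have hB'le : B' ≤ 1 - α := hAle (n+2) (by omega)
  have hBB'An : B + B' ≤ A n := by
    have h := hArec n
    nlinarith [haposR n, hA0 (n+1)]
  have hAnle : A n ≤ α := by
    rcases Nat.eq_zero_or_pos n with rfl | hn
    · rw [hA0v]
    · calc A n ≤ 1 - α := hAle n (by omega)
        _ ≤ α := by linarith
  have hq2ge : 2 ≤ q (n+2) := by
    have h := hqrec n
    have h1 : 1 * 1 ≤ a (n+2) * q (n+1) := Nat.mul_le_mul (hapos (n+2) (by omega)) (hq1' (n+1))
    have h2 := hq1' n
    omega
  -- the two critical arcs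
  set c : ℝ := if Even (n+1) then α else α - B with hc
  set γ : ℝ := if Even (n+1) then B - B' else 0 with hγ
  have hshiftq : ∀ X : ℝ, Int.fract (X + (q (n+1):ℝ)*(1-α))
      = Int.fract (X - ((q (n+1):ℝ)*α - (p (n+1) : ℝ))) := by
    intro X
    have e : X + (q (n+1):ℝ)*(1-α)
        = (X - ((q (n+1):ℝ)*α - (p (n+1) : ℝ))) + (((q (n+1) : ℤ) - (p (n+1):ℤ) : ℤ) : ℝ) := by
      push_cast; ring
    rw [e, Int.fract_add_intCast]
  -- agreement criterion
  have P1 : ∀ X : ℝ, ¬ Int.fract (X - c) < B → ¬ Int.fract (X - c - (1-α)) < B →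
      (Int.fract (X + (q (n+1):ℝ)*(1-α)) < α ↔ Int.fract X < α) := by
    intro X h1 h2
    rw [hshiftq]
    rcases Nat.even_or_odd (n+1) with hev | hod
    · rw [hEpar _ hev]
      apply agree_pos hα hα1 hB0 hBle
      · simpa [hc, if_pos hev] using h1
      · have e : Int.fract (X - c - (1-α)) = Int.fract X := by
          rw [hc, if_pos hev]
          have e2 : X - α - (1-α) = X + ((-1 : ℤ) : ℝ) := by push_cast; ring
          rw [e2, Int.fract_add_intCast]
        rwa [e] at h2
    · rw [hOpar _ hod, sub_neg_eq_add]
      apply agree_neg hα hα1 hB0 hBle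
      · simpa [hc, if_neg (Nat.not_even_iff_odd.mpr hod)] using h1
      · have e : Int.fract (X - c - (1-α)) = Int.fract (X + B) := by
          rw [hc, if_neg (Nat.not_even_iff_odd.mpr hod)]
          have e2 : X - (α - B) - (1-α) = (X + B) + ((-1 : ℤ) : ℝ) := by push_cast; ring
          rw [e2, Int.fract_add_intCast]
        rwa [e] at h2
  -- disagreement criterion
  have P2 : ∀ X : ℝ, Int.fract (X - c) < B →
      ¬ (Int.fract (X + (q (n+1):ℝ)*(1-α)) < α ↔ Int.fract X < α) := by
    intro X h1
    rw [hshiftq]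
    rcases Nat.even_or_odd (n+1) with hev | hod
    · rw [hEpar _ hev]
      apply disagree_pos hα hα1 hB0 hBle
      simpa [hc, if_pos hev] using h1
    · rw [hOpar _ hod, sub_neg_eq_add]
      apply disagree_neg hα hα1 hB0 hBle
      simpa [hc, if_neg (Nat.not_even_iff_odd.mpr hod)] using h1
  -- window lemma
  have P3 : ∀ t : ℝ, 0 ≤ t → t < B' → ∀ j : ℕ, 1 ≤ j → j ≤ q (n+2) + q (n+1) - 1 →
      B ≤ Int.fract (γ + t - (j:ℝ) * α) := by
    intro t ht0 htB j hj1 hjK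
    rcases lt_trichotomy j (q (n+2)) with hlt | heq | hgt
    · by_contra hcon
      push_neg at hcon
      set ξ := γ + t - (j:ℝ)*α with hξ
      have hf0 := Int.fract_nonneg ξ
      have hfd : Int.fract ξ = ξ - (⌊ξ⌋ : ℝ) := Int.self_sub_floor ξ ▸ rfl
      have hub : ξ - (⌊ξ⌋:ℝ) < B := by rw [← hfd]; exact hcon
      have hlb : 0 ≤ ξ - (⌊ξ⌋:ℝ) := by rw [← hfd]; exact hf0
      have hBabs : |(j:ℝ)*α - ((-⌊ξ⌋ : ℤ):ℝ)| < B := by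
        rw [abs_lt]
        rcases Nat.even_or_odd (n+1) with hev | hod
        · have hγv : γ = B - B' := by rw [hγ, if_pos hev]
          constructor
          · push_cast
            rw [hγv] at hξ
            simp only [hξ] at hub hlb
            linarith
          · push_cast
            rw [hγv] at hξ
            simp only [hξ] at hub hlb
            linarith
        · have hγv : γ = (0:ℝ) := by rw [hγ, if_neg (Nat.not_even_iff_odd.mpr hod)]
          constructor
          · push_cast
            rw [hγv] at hξ
            simp only [hξ] at hub hlb
            linarith
          · push_cast
            rw [hγv] at hξ
            simp only [hξ] at hub hlb
            linarith
      have := best (n+1) j (-⌊ξ⌋) hj1 hlt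
      linarith
    · -- j = q (n+2)
      subst heq
      rcases Nat.even_or_odd (n+1) with hev | hod
      · have hγv : γ = B - B' := by rw [hγ, if_pos hev]
        have hod2 : Odd (n+2) := Even.add_one hev
        have hE2 : ((q (n+2):ℝ)*α - (p (n+2) : ℝ)) = -B' := hOpar _ hod2
        have e : γ + t - (q (n+2):ℝ)*α = (B + t) + ((-(p (n+2):ℤ) : ℤ):ℝ) := by
          push_cast
          rw [hγv]
          linarith [hE2]
        rw [e, Int.fract_add_intCast, Int.fract_eq_self.mpr ⟨by linarith, by linarith⟩]
        linarith
      · have hγv : γ = (0:ℝ) := by rw [hγ, if_neg (Nat.not_even_iff_odd.mpr hod)]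
        have hev2 : Even (n+2) := Odd.add_one hod
        have hE2 : ((q (n+2):ℝ)*α - (p (n+2) : ℝ)) = B' := hEpar _ hev2
        have e : γ + t - (q (n+2):ℝ)*α = (t - B' + 1) + ((-(p (n+2):ℤ) - 1 : ℤ):ℝ) := by
          push_cast
          rw [hγv]
          linarith [hE2]
        rw [e, Int.fract_add_intCast, Int.fract_eq_self.mpr ⟨by linarith, by linarith⟩]
        linarith [hBB'An, hAnle]
    · -- q (n+2) < j
      obtain ⟨j', hj'⟩ : ∃ j', j = q (n+2) + j' := ⟨j - q (n+2), by omega⟩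
      have hj'1 : 1 ≤ j' := by omega
      have hj'2 : j' < q (n+1) := by omega
      by_contra hcon
      push_neg at hcon
      set ξ := γ + t - (j:ℝ)*α with hξ
      have hf0 := Int.fract_nonneg ξ
      have hfd : Int.fract ξ = ξ - (⌊ξ⌋ : ℝ) := Int.self_sub_floor ξ ▸ rfl
      have hub : ξ - (⌊ξ⌋:ℝ) < B := by rw [← hfd]; exact hcon
      have hlb : 0 ≤ ξ - (⌊ξ⌋:ℝ) := by rw [← hfd]; exact hf0
      have hjR : (j:ℝ) = (q (n+2):ℝ) + (j':ℝ) := by rw [hj']; push_cast; ring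
      have hAnabs : |(j':ℝ)*α - ((-(⌊ξ⌋ + (p (n+2):ℤ)) : ℤ):ℝ)| < A n := by
        rw [abs_lt]
        rcases Nat.even_or_odd (n+1) with hev | hod
        · have hγv : γ = B - B' := by rw [hγ, if_pos hev]
          have hod2 : Odd (n+2) := Even.add_one hev
          have hE2 : ((q (n+2):ℝ)*α - (p (n+2) : ℝ)) = -B' := hOpar _ hod2
          simp only [hξ, hjR, hγv] at hub hlb
          constructor
          · push_cast
            nlinarith [hub, hlb, hE2, hA0 n]
          · push_cast
            nlinarith [hub, hlb, hE2, hBB'An]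
        · have hγv : γ = (0:ℝ) := by rw [hγ, if_neg (Nat.not_even_iff_odd.mpr hod)]
          have hev2 : Even (n+2) := Odd.add_one hod
          have hE2 : ((q (n+2):ℝ)*α - (p (n+2) : ℝ)) = B' := hEpar _ hev2
          simp only [hξ, hjR, hγv] at hub hlb
          constructor
          · push_cast
            nlinarith [hub, hlb, hE2, hBB'An]
          · push_cast
            nlinarith [hub, hlb, hE2, hA0 n]
      have := best n j' (-(⌊ξ⌋ + (p (n+2):ℤ))) hj'1 hj'2
      linarith
  -- choose the starting point via the walk lemma
  set M : ℕ := if Even (n+1) then n+3 else n+2 with hM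
  have hMev : Even M := by
    rcases Nat.even_or_odd (n+1) with h | h
    · rw [hM, if_pos h]
      obtain ⟨r, hr⟩ := h
      exact ⟨r+1, by omega⟩
    · rw [hM, if_neg (Nat.not_even_iff_odd.mpr h)]
      exact Odd.add_one h
  have hMB' : A M ≤ B' := by
    rcases Nat.even_or_odd (n+1) with h | h
    · rw [hM, if_pos h]
      exact (hAdec (n+2)).le
    · rw [hM, if_neg (Nat.not_even_iff_odd.mpr h)]
  have hM1 : 1 ≤ M := by rw [hM]; split <;> omega
  have hAM1 : A M < 1 := lt_of_le_of_lt (hAle M hM1) (by linarith)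
  have hEM : (q M:ℝ)*α - (p M : ℝ) = A M := hEpar M hMev
  set yb : ℝ := c + γ + 2*(1-α) with hyb
  obtain ⟨j₀, hj₀b, hj₀⟩ := walk_lemma (A M) (x₀ - yb) (hA0 M) hAM1
  set i := j₀ * q M with hi
  have hfr : Int.fract (x₀ + (i:ℝ)*(1-α) - yb) < B' := by
    have hident : x₀ + (i:ℝ)*(1-α) - yb
        = ((x₀ - yb) - (j₀:ℝ) * A M) + (((j₀ * q M : ℤ) - (j₀ * p M : ℤ) : ℤ):ℝ) := by
      rw [hi]
      push_cast
      linear_combination (-(j₀:ℝ)) * hEM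
    rw [hident, Int.fract_add_intCast]
    exact lt_of_lt_of_le hj₀ hMB'
  set t := Int.fract (x₀ + (i:ℝ)*(1-α) - yb) with ht
  have ht0 : 0 ≤ t := Int.fract_nonneg _
  have htB' : t < B' := hfr
  obtain ⟨mI, hmI⟩ : ∃ m : ℤ, x₀ + (i:ℝ)*(1-α) = yb + t + (m:ℝ) := by
    refine ⟨⌊x₀ + (i:ℝ)*(1-α) - yb⌋, ?_⟩
    have h := Int.floor_add_fract (x₀ + (i:ℝ)*(1-α) - yb)
    rw [ht]
    linarith
  set L' := q (n+2) + q (n+1) - 2 with hL'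
  -- the window is disagreement-free
  have hwindow : ∀ k : ℕ, k < L' →
      ¬ Int.fract ((x₀ + ((i+k:ℕ):ℝ)*(1-α)) - c) < B ∧
      ¬ Int.fract ((x₀ + ((i+k:ℕ):ℝ)*(1-α)) - c - (1-α)) < B := by
    intro k hk
    constructor
    · have e : (x₀ + ((i+k:ℕ):ℝ)*(1-α)) - c
          = (γ + t - (((k+2:ℕ)):ℝ)*α) + ((mI + (k+2:ℕ) : ℤ):ℝ) := by
        push_cast
        linear_combination hmI
      rw [e, Int.fract_add_intCast]
      have h3 := P3 t ht0 htB' (k+2) (by omega) (by omega)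
      push_cast at h3 ⊢
      linarith
    · have e : (x₀ + ((i+k:ℕ):ℝ)*(1-α)) - c - (1-α)
          = (γ + t - (((k+1:ℕ)):ℝ)*α) + ((mI + (k+1:ℕ) : ℤ):ℝ) := by
        push_cast
        linear_combination hmI
      rw [e, Int.fract_add_intCast]
      have h3 := P3 t ht0 htB' (k+1) (by omega) (by omega)
      push_cast at h3 ⊢
      linarith
  have hper : ∀ k, k < L' → u (i+k) = u (i+k+q (n+1)) := by
    intro k hk
    have hw := hwindow k hk
    have hagree := P1 (x₀ + ((i+k:ℕ):ℝ)*(1-α)) hw.1 hw.2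
    simp only [hu, sturmianWord]
    rw [decide_eq_decide]
    have e : x₀ + ((i+k+q (n+1):ℕ):ℝ)*(1-α)
        = (x₀ + ((i+k:ℕ):ℝ)*(1-α)) + (q (n+1):ℝ)*(1-α) := by push_cast; ring
    rw [e]
    exact hagree.symm
  set Lv := q (n+1) + L' with hLv
  have hLvge : q (n+1) + 1 ≤ Lv := by
    have := hq1' (n+1)
    omega
  -- the factor and its power
  set v : List Bool := (List.range Lv).map (fun k => u (i + k)) with hv
  set w : List Bool := (List.range (q (n+1))).map (fun k => u (i + k)) with hw
  have hvlen : v.length = Lv := by rw [hv]; simp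
  have hwlen : w.length = q (n+1) := by rw [hw]; simp
  have hfv : FactorAt u v i := by
    show v = (List.range v.length).map _
    rw [hvlen]
  have hfw : FactorAt u w i := by
    show w = (List.range w.length).map _
    rw [hwlen]
  have hq11 := hq1' (n+1)
  have hperiod_all : ∀ k, k < Lv → u (i + k) = u (i + (k % q (n+1))) := by
    intro k
    induction k using Nat.strong_induction_on with
    | _ k ih =>
      intro hk
      rcases lt_or_ge k (q (n+1)) with h | h
      · rw [Nat.mod_eq_of_lt h]
      · have e : i + k = i + (k - q (n+1)) + q (n+1) := by omega
        rw [e, ← hper (k - q (n+1)) (by omega)]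
        rw [ih (k - q (n+1)) (by omega) (by omega)]
        rw [Nat.mod_eq_sub_mod h]
  have hFrac : FracPow w v := by
    refine ⟨?_, ?_, ?_⟩
    · intro hnil
      have := hwlen
      rw [hnil] at this
      simp at this
      omega
    · rw [hvlen, hwlen]; omega
    · intro idx hidx
      rw [hvlen] at hidx
      rw [hv, hw, hwlen]
      rw [List.getElem?_map, List.getElem?_map, List.getElem?_range hidx,
        List.getElem?_range (Nat.mod_lt _ (by omega))]
      simp only [Option.map_some]
      exact congrArg some (hperiod_all idx hidx)
  have hmemb : ((Lv:ℝ)/((q (n+1):ℝ))) ∈ expSet u w := by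
    refine ⟨v, ⟨i, hfv⟩, hFrac, ?_⟩
    rw [hvlen, hwlen]
  -- boundedness of the exponent set
  set M' : ℕ := if Even (n+1) then n+1 else n+2 with hM'
  have hM'ev : Even M' := by
    rcases Nat.even_or_odd (n+1) with h | h
    · rw [hM', if_pos h]; exact h
    · rw [hM', if_neg (Nat.not_even_iff_odd.mpr h)]; exact Odd.add_one h
  have hM'B : A M' ≤ B := by
    rcases Nat.even_or_odd (n+1) with h | h
    · rw [hM', if_pos h]
    · rw [hM', if_neg (Nat.not_even_iff_odd.mpr h)]; exact (hAdec (n+1)).le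
  have hM'1 : 1 ≤ M' := by rw [hM']; split <;> omega
  have hAM'1 : A M' < 1 := lt_of_le_of_lt (hAle M' hM'1) (by linarith)
  have hEM' : (q M':ℝ)*α - (p M' : ℝ) = A M' := hEpar M' hM'ev
  have hbdd : BddAbove (expSet u w) := by
    refine ⟨(q (n+1):ℝ) + (q M':ℝ) * (1 / A M') + 1, ?_⟩
    rintro r ⟨v', ⟨i₁, hv'at⟩, ⟨hv'ne, hv'len, hv'idx⟩, rfl⟩
    have hv'get : ∀ k, k < v'.length → v'[k]? = some (u (i₁ + k)) := by
      intro k hk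
      conv_lhs => rw [hv'at]
      rw [List.getElem?_map, List.getElem?_range hk]
      rfl
    have hper' : ∀ k, k + q (n+1) < v'.length → u (i₁ + k) = u (i₁ + k + q (n+1)) := by
      intro k hk
      have h1 := hv'idx k (by omega)
      have h2 := hv'idx (k + q (n+1)) hk
      rw [hv'get k (by omega)] at h1
      rw [hv'get (k + q (n+1)) hk] at h2
      rw [hwlen, Nat.add_mod_right] at h2
      rw [hwlen] at h1
      have h3 := h1.trans h2.symm
      have h4 : u (i₁ + k) = u (i₁ + (k + q (n+1))) := Option.some.inj h3
      rw [h4, Nat.add_assoc]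
    obtain ⟨j₁, hj₁b, hj₁⟩ := walk_lemma (A M') (x₀ + (i₁:ℝ)*(1-α) - c) (hA0 M') hAM'1
    set k₁ := j₁ * q M' with hk₁
    have hhit : Int.fract (x₀ + ((i₁ + k₁:ℕ):ℝ)*(1-α) - c) < B := by
      have hident : x₀ + ((i₁ + k₁:ℕ):ℝ)*(1-α) - c
          = ((x₀ + (i₁:ℝ)*(1-α) - c) - (j₁:ℝ) * A M')
            + (((j₁ * q M' : ℤ) - (j₁ * p M' : ℤ) : ℤ):ℝ) := by
        rw [hk₁]
        push_cast
        linear_combination (-(j₁:ℝ)) * hEM'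
      rw [hident, Int.fract_add_intCast]
      exact lt_of_lt_of_le hj₁ hM'B
    have hdis := P2 _ hhit
    have hne : u (i₁ + k₁) ≠ u (i₁ + k₁ + q (n+1)) := by
      intro hEq
      apply hdis
      simp only [hu, sturmianWord] at hEq
      rw [decide_eq_decide] at hEq
      have e : x₀ + ((i₁ + k₁ + q (n+1):ℕ):ℝ)*(1-α)
          = (x₀ + ((i₁+k₁:ℕ):ℝ)*(1-α)) + (q (n+1):ℝ)*(1-α) := by push_cast; ring
      rw [e] at hEq
      exact hEq.symm
    have hlen : v'.length ≤ k₁ + q (n+1) := by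
      by_contra hcon
      push_neg at hcon
      exact hne (hper' k₁ hcon)
    rw [hwlen]
    have h1 : (v'.length:ℝ) ≤ (k₁:ℝ) + (q (n+1):ℝ) := by exact_mod_cast hlen
    have hk₁R : (k₁:ℝ) ≤ (q M':ℝ) * (1/A M') := by
      rw [hk₁]
      push_cast
      calc (j₁:ℝ) * (q M' : ℝ) ≤ (1/A M') * (q M' : ℝ) :=
          mul_le_mul_of_nonneg_right hj₁b (Nat.cast_nonneg _)
        _ = (q M' : ℝ) * (1/A M') := by ring
    calc (v'.length:ℝ)/((q (n+1)):ℝ) ≤ (v'.length:ℝ) := by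
          apply div_le_self (Nat.cast_nonneg _)
          exact_mod_cast hq1' (n+1)
      _ ≤ (k₁:ℝ) + (q (n+1):ℝ) := h1
      _ ≤ (q (n+1):ℝ) + (q M':ℝ)*(1/A M') + 1 := by linarith [hk₁R]
  -- conclusion
  refine ⟨w, ⟨i, hfw⟩, hwlen, ?_⟩
  have hle := le_csSup hbdd hmemb
  have hLvR : (Lv:ℝ) = (2 + (a (n+2):ℝ)) * (q (n+1):ℝ) + (q n:ℝ) - 2 := by
    have e1 : Lv = 2 * q (n+1) + (a (n+2) * q (n+1) + q n) - 2 := by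
      rw [← hqrec n]
      rw [hLv, hL']
      omega
    rw [e1]
    have hle2 : 2 ≤ 2 * q (n+1) + (a (n+2) * q (n+1) + q n) := by
      have := hq1' (n+1)
      omega
    rw [Nat.cast_sub hle2]
    push_cast
    ring
  have hqn1 : (0:ℝ) < (q (n+1):ℝ) := hqposR (n+1)
  have heq2 : 2 + ((a (n+1+1):ℝ)) + ((q (n+1-1):ℝ) - 2)/((q (n+1)):ℝ) = (Lv:ℝ)/((q (n+1)):ℝ) := by
    have e3 : n+1+1 = n+2 := rfl
    have e4 : n+1-1 = n := rfl
    rw [e3, e4, hLvR]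
    field_simp
    ring
  rw [heq2]
  exact hle
end SturmianPaper
end

section
/- Let u be a uniformly recurrent infinite word and w any factor of u. Then every return word of w in u is a primitive word. -/
open Filter Topology

namespace SturmianPaper

variable {A : Type*} [DecidableEq A]

set_option linter.unusedSectionVars false

lemma len_flatten_replicate (z : List A) (k : ℕ) :
    (List.replicate k z).flatten.length = k * z.length := by
  simp [List.length_flatten, mul_comm]

lemma sub_mul_mod' (a k n : ℕ) (h : k * n ≤ a) : (a - k * n) % n = a % n := by
  conv_rhs => rw [← Nat.sub_add_cancel h]
  rw [Nat.add_mul_mod_self_right]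

lemma flatten_replicate_getElem? (z : List A) :
    ∀ k i, i < k * z.length → ((List.replicate k z).flatten)[i]? = z[i % z.length]? := by
  intro k
  induction k with
  | zero => intro i hi; omega
  | succ k ih =>
    intro i hi
    have hmul : (k + 1) * z.length = k * z.length + z.length := by ring
    rw [List.replicate_succ, List.flatten_cons]
    rcases lt_or_ge i z.length with h | h
    · rw [List.getElem?_append, if_pos h, Nat.mod_eq_of_lt h]
    · have hmod : (i - z.length) % z.length = i % z.length := by
        conv_rhs => rw [show i = (i - z.length) + z.length from by omega, Nat.add_mod_right]
      rw [List.getElem?_append, if_neg (by omega), ih _ (by omega), hmod]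

lemma w_period (w z : List A) (k : ℕ) (hk : 1 ≤ k) (hz : z ≠ [])
    (hp : w <+: (List.replicate k z).flatten ++ w) :
    ∀ i < w.length, w[i]? = z[i % z.length]? := by
  obtain ⟨s, hs⟩ := hp
  have hzl : 0 < z.length := List.length_pos_iff.mpr hz
  intro i
  induction i using Nat.strong_induction_on with
  | _ i ih =>
    intro hi
    have h1 : w[i]? = ((List.replicate k z).flatten ++ w)[i]? := by
      rw [← hs, List.getElem?_append, if_pos hi]
    rcases lt_or_ge i (k * z.length) with h | h
    · rw [h1, List.getElem?_append, if_pos (by rw [len_flatten_replicate]; omega),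
        flatten_replicate_getElem? z k i h]
    · rw [h1, List.getElem?_append, if_neg (by rw [len_flatten_replicate]; omega),
        len_flatten_replicate]
      have hlt : i - k * z.length < i := by
        have : 0 < k * z.length := by positivity
        omega
      rw [ih _ hlt (by omega), sub_mul_mod' i k z.length h]

lemma prefix_pow (w z : List A) (k : ℕ) (hk : 1 ≤ k) (hz : z ≠ [])
    (hp : w <+: (List.replicate k z).flatten ++ w) (j : ℕ) :
    w <+: (List.replicate j z).flatten ++ w := by
  have hzl : 0 < z.length := List.length_pos_iff.mpr hz
  have hw := w_period w z k hk hz hp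
  rw [List.prefix_iff_eq_take]
  apply List.ext_getElem?
  intro i
  rcases lt_or_ge i w.length with hi | hi
  · rw [List.getElem?_take, if_pos hi, hw i hi]
    rcases lt_or_ge i (j * z.length) with h | h
    · rw [List.getElem?_append, if_pos (by rw [len_flatten_replicate]; omega),
        flatten_replicate_getElem? z j i h]
    · rw [List.getElem?_append, if_neg (by rw [len_flatten_replicate]; omega),
        len_flatten_replicate, hw _ (by omega), sub_mul_mod' i j z.length h]
  · rw [List.getElem?_take, if_neg (by omega), List.getElem?_eq_none hi]

/-- every return word of a factor of a uniformly recurrent word is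
primitive. -/
theorem return_word_primitive {A : Type*} [DecidableEq A]
    (u : ℕ → A) (hur : UniformlyRecurrent u)
    (w : List A) (hw : IsFactor u w) (v : List A) (hv : IsReturnWord u w v) :
    Primitive v := by
  obtain ⟨hne, hfac, hpre, hocc⟩ := hv
  refine ⟨hne, ?_⟩
  rintro z k hk rfl
  obtain ⟨m, rfl⟩ : ∃ m, k = m + 2 := ⟨k - 2, by omega⟩
  set v := (List.replicate (m + 2) z).flatten with hv
  have hz : z ≠ [] := by
    rintro rfl
    simp [hv] at hne
  have hzl : 0 < z.length := List.length_pos_iff.mpr hz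
  have hvl : v.length = (m + 2) * z.length := len_flatten_replicate z (m + 2)
  set x := v ++ w with hx
  have hocc0 : w <+: x.drop 0 := by simpa using hpre
  have hoccv : w <+: x.drop v.length := by
    rw [hx, List.drop_left]
  have hoccz : w <+: x.drop z.length := by
    have hsplit : x = z ++ ((List.replicate (m + 1) z).flatten ++ w) := by
      rw [hx, hv, List.replicate_succ, List.flatten_cons, List.append_assoc]
    rw [hsplit, List.drop_left]
    exact prefix_pow w z (m + 2) (by omega) hz hpre (m + 1)
  have hz_lt : z.length < v.length := by rw [hvl]; nlinarith
  have hv_le : v.length ≤ x.length := by simp [hx]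
  set L := (List.range (x.length + 1)).filter
    (fun i => decide (w <+: x.drop i)) with hL
  have hmem : ∀ i, i ≤ x.length → w <+: x.drop i → i ∈ L := by
    intro i h1 h2
    rw [hL, List.mem_filter]
    exact ⟨List.mem_range.mpr (by omega), by simpa using h2⟩
  have hnd : L.Nodup := List.nodup_range.filter _
  have hsub : ({0, z.length, v.length} : Finset ℕ) ⊆ L.toFinset := by
    intro i hi
    simp only [Finset.mem_insert, Finset.mem_singleton] at hi
    rw [List.mem_toFinset]
    rcases hi with rfl | rfl | rfl
    · exact hmem 0 (by omega) hocc0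
    · exact hmem z.length (by omega) hoccz
    · exact hmem v.length (by omega) hoccv
  have hcard : ({0, z.length, v.length} : Finset ℕ).card = 3 := by
    rw [Finset.card_insert_of_notMem (by simp; omega),
      Finset.card_insert_of_notMem (by simp; omega), Finset.card_singleton]
  have h3 : 3 ≤ L.length := by
    rw [← List.toFinset_card_of_nodup hnd, ← hcard]
    exact Finset.card_le_card hsub
  have hocc' : occCount x w = L.length := rfl
  omega

end SturmianPaper
end
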